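/- arXiv:2405.03668 — 2 statements merged into one kernel-verified Lean document; each statement's English description precedes it below -/
import Mathlib

section
/- The curve ∇θ(t) = (−√(−a/α)(sin(ωt) + (b/a) cos(ωt)), √(−a/α)(cos(ωt) − (b/a) sin(ωt))) satisfies the adjoint equation d(∇θ)/dt = −J(t)ᵀ ∇θ, where J(t) is the Jacobian of the Hopf normal form vector field evaluated on the periodic orbit at (r₀ cos(ωt), r₀ sin(ωt)). -/
/-- The Hopf normal form vector field on ℝ². -/
noncomputable def hopfField (α β a b : ℝ) (p : ℝ × ℝ) : ℝ × ℝ :=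
  (α * p.1 - β * p.2 + (a * p.1 - b * p.2) * (p.1 ^ 2 + p.2 ^ 2),
   β * p.1 + α * p.2 + (b * p.1 + a * p.2) * (p.1 ^ 2 + p.2 ^ 2))

/-- The Jacobian matrix of the Hopf normal form vector field at a point. -/
noncomputable def hopfJacobian (α β a b : ℝ) (p : ℝ × ℝ) : Matrix (Fin 2) (Fin 2) ℝ :=
  !![fderiv ℝ (fun q => (hopfField α β a b q).1) p (1, 0),
     fderiv ℝ (fun q => (hopfField α β a b q).1) p (0, 1);
     fderiv ℝ (fun q => (hopfField α β a b q).2) p (1, 0),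
     fderiv ℝ (fun q => (hopfField α β a b q).2) p (0, 1)]

lemma hopf_fderiv1 (α β a b : ℝ) (p v : ℝ × ℝ) :
    fderiv ℝ (fun q => (hopfField α β a b q).1) p v
      = (α + a*(p.1^2+p.2^2) + (a*p.1 - b*p.2)*(2*p.1))*v.1
        + (-β - b*(p.1^2+p.2^2) + (a*p.1-b*p.2)*(2*p.2))*v.2 := by
  have h1 : HasFDerivAt (fun q : ℝ×ℝ => q.1) (ContinuousLinearMap.fst ℝ ℝ ℝ) p := hasFDerivAt_fst
  have h2 : HasFDerivAt (fun q : ℝ×ℝ => q.2) (ContinuousLinearMap.snd ℝ ℝ ℝ) p := hasFDerivAt_snd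
  have H := ((h1.const_mul α).sub (h2.const_mul β)).add
    (((h1.const_mul a).sub (h2.const_mul b)).mul ((h1.mul h1).add (h2.mul h2)))
  have hfun : (fun q => (hopfField α β a b q).1)
      = fun q : ℝ×ℝ => α*q.1 - β*q.2 + (a*q.1-b*q.2)*(q.1*q.1+q.2*q.2) := by
    funext q
    show α*q.1 - β*q.2 + (a*q.1-b*q.2)*(q.1^2+q.2^2) = _
    ring
  rw [hfun, (show HasFDerivAt (fun q : ℝ×ℝ => α*q.1 - β*q.2 + (a*q.1-b*q.2)*(q.1*q.1+q.2*q.2)) _ p from H).fderiv]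
  simp [ContinuousLinearMap.add_apply, ContinuousLinearMap.smul_apply,
    ContinuousLinearMap.sub_apply]
  ring

lemma hopf_fderiv2 (α β a b : ℝ) (p v : ℝ × ℝ) :
    fderiv ℝ (fun q => (hopfField α β a b q).2) p v
      = (β + b*(p.1^2+p.2^2) + (b*p.1 + a*p.2)*(2*p.1))*v.1
        + (α + a*(p.1^2+p.2^2) + (b*p.1+a*p.2)*(2*p.2))*v.2 := by
  have h1 : HasFDerivAt (fun q : ℝ×ℝ => q.1) (ContinuousLinearMap.fst ℝ ℝ ℝ) p := hasFDerivAt_fst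
  have h2 : HasFDerivAt (fun q : ℝ×ℝ => q.2) (ContinuousLinearMap.snd ℝ ℝ ℝ) p := hasFDerivAt_snd
  have H := ((h1.const_mul β).add (h2.const_mul α)).add
    (((h1.const_mul b).add (h2.const_mul a)).mul ((h1.mul h1).add (h2.mul h2)))
  have hfun : (fun q => (hopfField α β a b q).2)
      = fun q : ℝ×ℝ => β*q.1 + α*q.2 + (b*q.1+a*q.2)*(q.1*q.1+q.2*q.2) := by
    funext q
    show β*q.1 + α*q.2 + (b*q.1+a*q.2)*(q.1^2+q.2^2) = _
    ring
  rw [hfun, (show HasFDerivAt (fun q : ℝ×ℝ => β*q.1 + α*q.2 + (b*q.1+a*q.2)*(q.1*q.1+q.2*q.2)) _ p from H).fderiv]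
  simp [ContinuousLinearMap.add_apply, ContinuousLinearMap.smul_apply,
    ContinuousLinearMap.sub_apply]
  ring

theorem hopf_phase_gradient_adjoint
    (α β a b : ℝ) (hα : 0 < α) (ha : a < 0)
    (r₀ ω : ℝ) (hr₀ : r₀ = Real.sqrt (-α / a)) (hω : ω = β - α * b / a)
    (nablaθ : ℝ → Fin 2 → ℝ)
    (hnabla : ∀ t : ℝ, nablaθ t =
      ![-Real.sqrt (-a / α) * (Real.sin (ω * t) + b * Real.cos (ω * t) / a),
        Real.sqrt (-a / α) * (Real.cos (ω * t) - b * Real.sin (ω * t) / a)]) :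
    ∀ t : ℝ,
      HasDerivAt nablaθ
        (-(Matrix.mulVec
            (hopfJacobian α β a b (r₀ * Real.cos (ω * t), r₀ * Real.sin (ω * t))).transpose
            (nablaθ t))) t := by
  intro t
  have ha0 : a ≠ 0 := ne_of_lt ha
  have hα0 : α ≠ 0 := ne_of_gt hα
  have hr2 : r₀ ^ 2 = -α / a := by
    rw [hr₀, Real.sq_sqrt]
    rw [show -α/a = α/(-a) by ring]
    exact div_nonneg hα.le (by linarith)
  have hfun : nablaθ = fun t => ![-Real.sqrt (-a / α) * (Real.sin (ω * t) + b * Real.cos (ω * t) / a),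
        Real.sqrt (-a / α) * (Real.cos (ω * t) - b * Real.sin (ω * t) / a)] := funext hnabla
  rw [hfun]
  apply hasDerivAt_pi.2
  intro i
  set k := Real.sqrt (-a / α) with hk
  have hωt : HasDerivAt (fun t : ℝ => ω * t) ω t := by
    simpa using (hasDerivAt_id t).const_mul ω
  have hs : HasDerivAt (fun t => Real.sin (ω * t)) (Real.cos (ω * t) * ω) t :=
    (Real.hasDerivAt_sin (ω * t)).comp t hωt
  have hc : HasDerivAt (fun t => Real.cos (ω * t)) (-Real.sin (ω * t) * ω) t :=
    (Real.hasDerivAt_cos (ω * t)).comp t hωt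
  fin_cases i
  · simp only [Matrix.cons_val_zero]
    have H : HasDerivAt (fun t => -k * (Real.sin (ω * t) + b * Real.cos (ω * t) / a)) _ t :=
      (hs.add ((hc.const_mul b).div_const a)).const_mul (-k)
    refine H.congr_deriv ?_
    symm
    simp [hopfJacobian, Matrix.mulVec_transpose, Matrix.vecMul, dotProduct,
      Fin.sum_univ_two, hopf_fderiv1, hopf_fderiv2, Matrix.vecHead, Matrix.vecTail,
      Matrix.transpose_apply]
    have hcs : Real.sin (ω*t)^2 + Real.cos (ω*t)^2 = 1 := Real.sin_sq_add_cos_sq _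
    have hR : (r₀ * Real.cos (ω*t))^2 + (r₀ * Real.sin (ω*t))^2 = -α/a := by
      linear_combination r₀^2 * hcs + hr2
    rw [hR, hω]
    field_simp
    ring
  · simp only [Matrix.cons_val_one, Matrix.head_cons]
    have H : HasDerivAt (fun t => k * (Real.cos (ω * t) - b * Real.sin (ω * t) / a)) _ t :=
      (hc.sub ((hs.const_mul b).div_const a)).const_mul k
    refine H.congr_deriv ?_
    symm
    simp [hopfJacobian, Matrix.mulVec_transpose, Matrix.vecMul, dotProduct,
      Fin.sum_univ_two, hopf_fderiv1, hopf_fderiv2, Matrix.vecHead, Matrix.vecTail,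
      Matrix.transpose_apply]
    have hcs : Real.sin (ω*t)^2 + Real.cos (ω*t)^2 = 1 := Real.sin_sq_add_cos_sq _
    have hR : (r₀ * Real.cos (ω*t))^2 + (r₀ * Real.sin (ω*t))^2 = -α/a := by
      linear_combination r₀^2 * hcs + hr2
    rw [hR, hω]
    field_simp
    ring
end

section
/- The curve ∇ψ(t) = C·(cos(ωt), sin(ωt)) satisfies the amplitude adjoint equation d(∇ψ)/dt = −(J(t)ᵀ − κ·Id) ∇ψ with κ = −2α, where J(t) is the Jacobian of the Hopf normal form vector field evaluated on the periodic orbit. -/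
lemma hopf_fderiv_fst (α β a b : ℝ) (p v : ℝ × ℝ) :
    fderiv ℝ (fun q => (hopfField α β a b q).1) p v
      = α * v.1 - β * v.2 + (a * v.1 - b * v.2) * (p.1 ^ 2 + p.2 ^ 2)
        + (a * p.1 - b * p.2) * (2 * p.1 * v.1 + 2 * p.2 * v.2) := by
  have h1 : HasFDerivAt (fun q : ℝ × ℝ => q.1) (ContinuousLinearMap.fst ℝ ℝ ℝ) p :=
    hasFDerivAt_fst
  have h2 : HasFDerivAt (fun q : ℝ × ℝ => q.2) (ContinuousLinearMap.snd ℝ ℝ ℝ) p :=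
    hasFDerivAt_snd
  have H := (((h1.const_mul α).sub (h2.const_mul β)).add
    (((h1.const_mul a).sub (h2.const_mul b)).mul ((h1.mul h1).add (h2.mul h2))))
  have hfun : (fun q => (hopfField α β a b q).1)
      = fun q : ℝ × ℝ => α * q.1 - β * q.2 + (a * q.1 - b * q.2) * (q.1 * q.1 + q.2 * q.2) := by
    funext q; simp only [hopfField]; ring
  rw [hfun, (show HasFDerivAt (fun q : ℝ × ℝ => α * q.1 - β * q.2 + (a * q.1 - b * q.2) * (q.1 * q.1 + q.2 * q.2)) _ p from H).fderiv]
  simp [ContinuousLinearMap.add_apply, ContinuousLinearMap.smul_apply]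
  ring

lemma hopf_fderiv_snd (α β a b : ℝ) (p v : ℝ × ℝ) :
    fderiv ℝ (fun q => (hopfField α β a b q).2) p v
      = β * v.1 + α * v.2 + (b * v.1 + a * v.2) * (p.1 ^ 2 + p.2 ^ 2)
        + (b * p.1 + a * p.2) * (2 * p.1 * v.1 + 2 * p.2 * v.2) := by
  have h1 : HasFDerivAt (fun q : ℝ × ℝ => q.1) (ContinuousLinearMap.fst ℝ ℝ ℝ) p :=
    hasFDerivAt_fst
  have h2 : HasFDerivAt (fun q : ℝ × ℝ => q.2) (ContinuousLinearMap.snd ℝ ℝ ℝ) p :=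
    hasFDerivAt_snd
  have H := (((h1.const_mul β).add (h2.const_mul α)).add
    (((h1.const_mul b).add (h2.const_mul a)).mul ((h1.mul h1).add (h2.mul h2))))
  have hfun : (fun q => (hopfField α β a b q).2)
      = fun q : ℝ × ℝ => β * q.1 + α * q.2 + (b * q.1 + a * q.2) * (q.1 * q.1 + q.2 * q.2) := by
    funext q; simp only [hopfField]; ring
  rw [hfun, (show HasFDerivAt (fun q : ℝ × ℝ => β * q.1 + α * q.2 + (b * q.1 + a * q.2) * (q.1 * q.1 + q.2 * q.2)) _ p from H).fderiv]
  simp [ContinuousLinearMap.add_apply, ContinuousLinearMap.smul_apply]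
  ring

theorem hopf_amplitude_gradient_adjoint
    (α β a b : ℝ) (hα : 0 < α) (ha : a < 0)
    (r₀ ω κ C : ℝ) (hr₀ : r₀ = Real.sqrt (-α / a)) (hω : ω = β - α * b / a)
    (hκ : κ = -2 * α)
    (nablaψ : ℝ → Fin 2 → ℝ)
    (hnabla : ∀ t : ℝ, nablaψ t = ![C * Real.cos (ω * t), C * Real.sin (ω * t)]) :
    ∀ t : ℝ,
      HasDerivAt nablaψ
        (-(Matrix.mulVec
            ((hopfJacobian α β a b (r₀ * Real.cos (ω * t), r₀ * Real.sin (ω * t))).transpose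
              - κ • (1 : Matrix (Fin 2) (Fin 2) ℝ))
            (nablaψ t))) t := by
  intro t
  have ha' : a ≠ 0 := ne_of_lt ha
  have hr2 : r₀ ^ 2 = -α / a := by
    rw [hr₀, Real.sq_sqrt]
    rw [div_nonneg_iff]; right; constructor <;> linarith
  have hpyth : (r₀ * Real.cos (ω * t)) ^ 2 + (r₀ * Real.sin (ω * t)) ^ 2 = -α / a := by
    have h := Real.sin_sq_add_cos_sq (ω * t)
    nlinarith [hr2]
  have hfuneq : nablaψ = fun s => ![C * Real.cos (ω * s), C * Real.sin (ω * s)] :=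
    funext hnabla
  have hV : -(Matrix.mulVec
        ((hopfJacobian α β a b (r₀ * Real.cos (ω * t), r₀ * Real.sin (ω * t))).transpose
          - κ • (1 : Matrix (Fin 2) (Fin 2) ℝ))
        (nablaψ t))
      = ![C * (-Real.sin (ω * t) * ω), C * (Real.cos (ω * t) * ω)] := by
    have hsc := Real.sin_sq_add_cos_sq (ω * t)
    have har2 : a * r₀ ^ 2 = -α := by rw [hr2]; field_simp
    have hω2 : ω = β + b * r₀ ^ 2 := by rw [hω, hr2]; field_simp; ring
    have hpyth2 : (r₀ * Real.cos (ω * t)) ^ 2 + (r₀ * Real.sin (ω * t)) ^ 2 = r₀ ^ 2 := by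
      linear_combination r₀ ^ 2 * hsc
    funext i
    fin_cases i
    · simp only [hnabla, hopfJacobian, Matrix.mulVec, dotProduct, Fin.sum_univ_two,
        Matrix.transpose_apply, Matrix.sub_apply, Matrix.smul_apply, Matrix.one_apply,
        hopf_fderiv_fst, hopf_fderiv_snd, Pi.neg_apply, Matrix.cons_val', Matrix.cons_val_zero,
        Matrix.cons_val_one, Matrix.head_cons, Matrix.head_fin_const, Matrix.empty_val',
        Matrix.cons_val_fin_one, Matrix.of_apply, smul_eq_mul]
      simp only [hpyth2]
      rw [hκ]
      norm_num
      linear_combination (-2*r₀^2*a*C*Real.cos (ω*t)) * hsc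
        + (-3*C*Real.cos (ω*t)) * har2 + (C*Real.sin (ω*t)) * hω2
    · simp only [hnabla, hopfJacobian, Matrix.mulVec, dotProduct, Fin.sum_univ_two,
        Matrix.transpose_apply, Matrix.sub_apply, Matrix.smul_apply, Matrix.one_apply,
        hopf_fderiv_fst, hopf_fderiv_snd, Pi.neg_apply, Matrix.cons_val', Matrix.cons_val_zero,
        Matrix.cons_val_one, Matrix.head_cons, Matrix.head_fin_const, Matrix.empty_val',
        Matrix.cons_val_fin_one, Matrix.of_apply, smul_eq_mul]
      simp only [hpyth2]
      rw [hκ]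
      norm_num
      linear_combination (-2*r₀^2*a*C*Real.sin (ω*t)) * hsc
        + (-3*C*Real.sin (ω*t)) * har2 + (-C*Real.cos (ω*t)) * hω2
  rw [hV, hfuneq]
  rw [hasDerivAt_pi]
  intro i
  have hc : HasDerivAt (fun s : ℝ => C * Real.cos (ω * s)) (C * (-Real.sin (ω * t) * ω)) t := by
    have := ((Real.hasDerivAt_cos (ω * t)).comp t ((hasDerivAt_id t).const_mul ω)).const_mul C
    simpa [mul_comm] using this
  have hs : HasDerivAt (fun s : ℝ => C * Real.sin (ω * s)) (C * (Real.cos (ω * t) * ω)) t := by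
    have := ((Real.hasDerivAt_sin (ω * t)).comp t ((hasDerivAt_id t).const_mul ω)).const_mul C
    simpa [mul_comm] using this
  fin_cases i
  · simpa using hc
  · simpa using hs
end
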